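/- arXiv:1807.09486 — 3 statements merged into one kernel-verified Lean document; each statement's English description precedes it below -/
import Mathlib

section
/- The variance of the limiting distribution of the Möbius function equals 6/π²: the averages (1/n)·∑_{k=1}^{n} μ(k)² converge to 6/π² as n → ∞; equivalently, the set of squarefree positive integers has natural density 6/π². -/
open Filter ArithmeticFunction Real Finset Topology
open scoped ArithmeticFunction.Moebius

-- d^2 ∣ b^2 * a ↔ d ∣ b when a squarefree, a ≠ 0
lemma aux_sq_dvd {a b d : ℕ} (ha : a ≠ 0) (hsa : Squarefree a) :
    d ^ 2 ∣ b ^ 2 * a ↔ d ∣ b := by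
  rcases eq_or_ne b 0 with rfl | hb
  · simp
  rcases eq_or_ne d 0 with rfl | hd
  · simp [pow_succ, ha, hb]
  rw [← Nat.factorization_le_iff_dvd hd hb,
    ← Nat.factorization_le_iff_dvd (pow_ne_zero _ hd) (by positivity),
    Nat.factorization_mul (pow_ne_zero _ hb) ha, Nat.factorization_pow, Nat.factorization_pow]
  constructor
  · intro h p
    have h1 := h p
    have h2 := hsa.natFactorization_le_one p
    simp only [Finsupp.coe_add, Finsupp.coe_smul, Pi.add_apply, Pi.smul_apply, smul_eq_mul] at h1 ⊢
    omega
  · intro h p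
    have h1 := h p
    simp only [Finsupp.coe_add, Finsupp.coe_smul, Pi.add_apply, Pi.smul_apply, smul_eq_mul]
    omega

lemma aux_sum_div_moebius {b : ℕ} (hb : b ≠ 0) :
    ∑ d ∈ b.divisors, μ d = if b = 1 then 1 else 0 := by
  have h := congrArg (fun f : ArithmeticFunction ℤ => f b) ArithmeticFunction.coe_moebius_mul_coe_zeta
  simp only [ArithmeticFunction.mul_apply, ArithmeticFunction.one_apply] at h
  rw [← h, ← Nat.sum_divisorsAntidiagonal (f := fun a _ => (μ a : ℤ))]
  refine Finset.sum_congr rfl fun x hx => ?_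
  rw [Nat.mem_divisorsAntidiagonal] at hx
  have h2 : x.2 ≠ 0 := fun h0 => hb (by simp [← hx.1, h0])
  simp [ArithmeticFunction.intCoe_apply, ArithmeticFunction.natCoe_apply,
    ArithmeticFunction.zeta_apply, h2]

lemma aux_pointwise {k n : ℕ} (hk : k ≠ 0) (hkn : k ≤ n) :
    (μ k) ^ 2 = ∑ d ∈ (Finset.Icc 1 n).filter (fun d => d ^ 2 ∣ k), μ d := by
  obtain ⟨a, b, hab, hsa⟩ := Nat.sq_mul_squarefree k
  have ha : a ≠ 0 := by rintro rfl; simp at hab; omega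
  have hb : b ≠ 0 := by rintro rfl; simp at hab; omega
  have hbn : b ≤ n := by
    have : b ≤ b ^ 2 * a := le_trans (Nat.le_self_pow two_ne_zero b) (Nat.le_mul_of_pos_right _ (Nat.pos_of_ne_zero ha))
    omega
  have hset : (Finset.Icc 1 n).filter (fun d => d ^ 2 ∣ k) = b.divisors := by
    ext d
    simp only [Finset.mem_filter, Finset.mem_Icc, Nat.mem_divisors, ← hab, aux_sq_dvd ha hsa]
    constructor
    · rintro ⟨⟨-, -⟩, hd⟩; exact ⟨hd, hb⟩
    · rintro ⟨hd, -⟩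
      exact ⟨⟨Nat.one_le_iff_ne_zero.2 fun h0 => hb (by simpa [h0] using hd),
        le_trans (Nat.le_of_dvd (Nat.pos_of_ne_zero hb) hd) hbn⟩, hd⟩
  rw [hset, aux_sum_div_moebius hb, moebius_sq]
  congr 1
  simp only [eq_iff_iff]
  constructor
  · intro hsk
    by_contra hb1
    obtain ⟨p, hp, hpb⟩ := Nat.exists_prime_and_dvd hb1
    exact hp.not_isUnit (hsk p (dvd_trans (mul_dvd_mul hpb hpb) (by rw [← hab]; ring_nf; exact Dvd.intro a rfl)))
  · rintro rfl; rw [← hab]; simpa using hsa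

lemma aux_swap (n : ℕ) :
    ∑ k ∈ Finset.Icc 1 n, (μ k) ^ 2 = ∑ d ∈ Finset.Icc 1 n, μ d * (n / d ^ 2 : ℕ) := by
  have h1 : ∑ k ∈ Finset.Icc 1 n, (μ k) ^ 2
      = ∑ k ∈ Finset.Icc 1 n, ∑ d ∈ Finset.Icc 1 n, if d ^ 2 ∣ k then μ d else 0 := by
    refine Finset.sum_congr rfl fun k hk => ?_
    rw [Finset.mem_Icc] at hk
    rw [aux_pointwise (by omega) hk.2, Finset.sum_filter]
  rw [h1, Finset.sum_comm]
  refine Finset.sum_congr rfl fun d _ => ?_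
  have hicc : Finset.Icc 1 n = Finset.Ioc 0 n := by rw [← Finset.Icc_add_one_left_eq_Ioc]; rfl
  rw [← Finset.sum_filter, Finset.sum_const, hicc, Nat.Ioc_filter_dvd_card_eq_div]
  simp [mul_comm]

lemma aux_summable : Summable (fun d : ℕ => (μ d : ℝ) / (d : ℝ) ^ 2) := by
  have hs : Summable (fun d : ℕ => 1 / (d : ℝ) ^ 2) := Real.summable_one_div_nat_pow.2 one_lt_two
  refine Summable.of_abs (hs.of_nonneg_of_le (fun d => abs_nonneg _) fun d => ?_)
  rw [abs_div, abs_pow, Nat.abs_cast]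
  rcases Nat.eq_zero_or_pos d with rfl | hd
  · simp
  · exact div_le_div₀ zero_le_one (by exact_mod_cast (abs_moebius_le_one (n := d)))
      (by positivity) le_rfl

lemma aux_tsum_val : ∑' d : ℕ, (μ d : ℝ) / (d : ℝ) ^ 2 = 6 / π ^ 2 := by
  have h2 : (1 : ℝ) < (2 : ℂ).re := by norm_num
  have hπ : ((π : ℂ)) ^ 2 ≠ 0 := by
    simp [Complex.ofReal_ne_zero, Real.pi_ne_zero]
  have hL : LSeries (fun n => (μ n : ℂ)) 2 = 6 / (π : ℂ) ^ 2 := by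
    have h := LSeries_one_mul_Lseries_moebius (s := 2) h2
    rw [LSeries_one_eq_riemannZeta h2, riemannZeta_two] at h
    rw [eq_div_iff hπ]
    have hπ6 : ((π : ℂ)) ^ 2 / 6 ≠ 0 := by
      simp [Complex.ofReal_ne_zero, Real.pi_ne_zero]
    field_simp at h
    linear_combination h
  have hterm : ∀ n : ℕ, LSeries.term (fun n => (μ n : ℂ)) 2 n
      = (((μ n : ℝ) / (n : ℝ) ^ 2 : ℝ) : ℂ) := by
    intro n
    rcases eq_or_ne n 0 with rfl | hn
    · simp [LSeries.term_zero]
    · rw [LSeries.term_of_ne_zero hn]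
      have : ((n : ℂ)) ^ (2 : ℂ) = ((n : ℂ)) ^ (2 : ℕ) := by
        rw [show (2 : ℂ) = ((2 : ℕ) : ℂ) by norm_num, Complex.cpow_natCast]
      rw [this]
      push_cast
      ring
  have : ((∑' d : ℕ, (μ d : ℝ) / (d : ℝ) ^ 2 : ℝ) : ℂ) = 6 / (π : ℂ) ^ 2 := by
    rw [Complex.ofReal_tsum, ← hL, LSeries]
    exact tsum_congr fun n => (hterm n).symm
  have h6 : ((6 / π ^ 2 : ℝ) : ℂ) = 6 / (π : ℂ) ^ 2 := by push_cast; ring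
  exact Complex.ofReal_injective (this.trans h6.symm)

noncomputable def cfun (d : ℕ) : ℝ := 1 / (d : ℝ) ^ 2

lemma cfun_summable : Summable cfun := Real.summable_one_div_nat_pow.2 one_lt_two

noncomputable def tailf (s : ℕ) : ℝ := ∑' k : ℕ, cfun (k + s)

lemma tail_tendsto : Tendsto tailf atTop (𝓝 0) := by
  have h : ∀ s, tailf s = (∑' d, cfun d) - ∑ i ∈ Finset.range s, cfun i := by
    intro s
    have := Summable.sum_add_tsum_nat_add (f := cfun) s cfun_summable
    unfold tailf
    linarith
  rw [funext h]
  have := (cfun_summable.hasSum.tendsto_sum_nat).const_sub (∑' d, cfun d)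
  simpa using this

lemma tail_le {s n : ℕ} : ∑ d ∈ Finset.Ioc s n, cfun d ≤ tailf (s + 1) := by
  have hsub : ∀ i ∈ Finset.range (n - s), cfun (s + 1 + i) = cfun (i + (s + 1)) := by
    intro i _; rw [add_comm]
  rw [← Finset.Icc_add_one_left_eq_Ioc, ← Finset.Ico_add_one_right_eq_Icc, Finset.sum_Ico_eq_sum_range]
  have hs : Summable (fun i => cfun (i + (s + 1))) := (summable_nat_add_iff (s+1)).2 cfun_summable
  calc ∑ i ∈ Finset.range (n + 1 - (s+1)), cfun (s + 1 + i)
      = ∑ i ∈ Finset.range (n + 1 - (s+1)), cfun (i + (s + 1)) := by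
        refine Finset.sum_congr rfl fun i _ => ?_; rw [add_comm (s+1) i]
    _ ≤ tailf (s + 1) := Summable.sum_le_tsum _ (fun i _ => by unfold cfun; positivity) hs

lemma g_tendsto :
    Tendsto (fun n : ℕ => ∑ d ∈ Finset.Icc 1 n, (μ d : ℝ) / (d : ℝ) ^ 2) atTop
      (𝓝 (6 / π ^ 2)) := by
  have h : ∀ n : ℕ, ∑ d ∈ Finset.Icc 1 n, (μ d : ℝ) / (d : ℝ) ^ 2
      = ∑ d ∈ Finset.range (n + 1), (μ d : ℝ) / (d : ℝ) ^ 2 := by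
    intro n
    refine Finset.sum_subset (fun x hx => ?_) (fun x hx hx' => ?_)
    · rw [Finset.mem_Icc] at hx; rw [Finset.mem_range]; omega
    · rw [Finset.mem_range] at hx; rw [Finset.mem_Icc] at hx'
      have : x = 0 := by omega
      simp [this]
  rw [funext h, ← aux_tsum_val]
  exact aux_summable.hasSum.tendsto_sum_nat.comp (tendsto_add_atTop_nat 1)

lemma term_bound_small {n d : ℕ} (hn : 0 < n) (hd : 0 < d) :
    |(μ d : ℝ) * ((n / d ^ 2 : ℕ) : ℝ) / n - (μ d : ℝ) / (d : ℝ) ^ 2| ≤ 1 / n := by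
  have hd2 : (0 : ℝ) < (d : ℝ) ^ 2 := by positivity
  have hnR : (0 : ℝ) < (n : ℝ) := by exact_mod_cast hn
  have h1 : ((n / d ^ 2 : ℕ) : ℝ) ≤ (n : ℝ) / (d : ℝ) ^ 2 := by
    have := Nat.cast_div_le (α := ℝ) (m := n) (n := d ^ 2)
    push_cast at this ⊢; exact this
  have h2 : (n : ℝ) / (d : ℝ) ^ 2 ≤ ((n / d ^ 2 : ℕ) : ℝ) + 1 := by
    have hmod := Nat.div_add_mod n (d ^ 2)
    have hlt : n % d ^ 2 < d ^ 2 := Nat.mod_lt _ (by positivity)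
    have hmodR : (d : ℝ) ^ 2 * ((n / d ^ 2 : ℕ) : ℝ) + ((n % d ^ 2 : ℕ) : ℝ) = (n : ℝ) := by
      exact_mod_cast hmod
    have hltR : ((n % d ^ 2 : ℕ) : ℝ) < (d : ℝ) ^ 2 := by exact_mod_cast hlt
    rw [div_le_iff₀ hd2]
    nlinarith
  have hμ : |(μ d : ℝ)| ≤ 1 := by exact_mod_cast (abs_moebius_le_one (n := d))
  have hcan : (n : ℝ) / (d : ℝ) ^ 2 * (d : ℝ) ^ 2 = (n : ℝ) := div_mul_cancel₀ _ hd2.ne'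
  have hx : ((n / d ^ 2 : ℕ) : ℝ) / n ≤ 1 / (d : ℝ) ^ 2 := by
    rw [div_le_div_iff₀ hnR hd2]
    have := mul_le_mul_of_nonneg_right h1 hd2.le
    linarith
  have hy : 1 / (d : ℝ) ^ 2 ≤ (((n / d ^ 2 : ℕ) : ℝ) + 1) / n := by
    rw [div_le_div_iff₀ hd2 hnR]
    have := mul_le_mul_of_nonneg_right h2 hd2.le
    linarith
  have hz : (((n / d ^ 2 : ℕ) : ℝ) + 1) / n = ((n / d ^ 2 : ℕ) : ℝ) / n + 1 / n := by rw [add_div]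
  have key : |((n / d ^ 2 : ℕ) : ℝ) / (n : ℝ) - 1 / (d : ℝ) ^ 2| ≤ 1 / (n : ℝ) := by
    rw [abs_le]
    constructor
    · linarith
    · have h1n : (0:ℝ) < 1 / n := by positivity
      linarith
  calc |(μ d : ℝ) * ((n / d ^ 2 : ℕ) : ℝ) / n - (μ d : ℝ) / (d : ℝ) ^ 2|
      = |(μ d : ℝ)| * |((n / d ^ 2 : ℕ) : ℝ) / n - 1 / (d : ℝ) ^ 2| := by
        rw [← abs_mul]; ring_nf
    _ ≤ 1 * (1 / n) := by
        exact mul_le_mul hμ key (abs_nonneg _) zero_le_one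
    _ = 1 / n := one_mul _

lemma sqrt_tendsto_atTop : Tendsto Nat.sqrt atTop atTop :=
  tendsto_atTop_atTop.2 fun b => ⟨b * b, fun n hn => Nat.le_sqrt.2 hn⟩

theorem moebius_sq_average_tendsto :
    Tendsto
      (fun n : ℕ => (∑ k ∈ Finset.Icc 1 n, ((moebius k : ℝ)) ^ 2) / n)
      atTop (nhds (6 / π ^ 2)) := by
  set F : ℕ → ℝ := fun n : ℕ => (∑ k ∈ Finset.Icc 1 n, ((moebius k : ℝ)) ^ 2) / n with hF
  set g : ℕ → ℝ := fun n : ℕ => ∑ d ∈ Finset.Icc 1 n, (μ d : ℝ) / (d : ℝ) ^ 2 with hg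
  set B : ℕ → ℝ := fun n : ℕ => ((Nat.sqrt n : ℝ)) / n + tailf (Nat.sqrt n + 1) with hB
  have hswapR : ∀ n : ℕ, (∑ k ∈ Finset.Icc 1 n, (μ k : ℝ) ^ 2)
      = ∑ d ∈ Finset.Icc 1 n, (μ d : ℝ) * ((n / d ^ 2 : ℕ) : ℝ) := by
    intro n
    have h2 := congrArg (Int.cast : ℤ → ℝ) (aux_swap n)
    push_cast at h2
    exact h2
  have hdiff : ∀ᶠ n in atTop, ‖F n - g n‖ ≤ B n := by
    filter_upwards [eventually_ge_atTop 1] with n hn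
    have hn0 : 0 < n := hn
    set s := Nat.sqrt n with hs
    have hsn : s ≤ n := Nat.sqrt_le_self n
    have hFn : F n = ∑ d ∈ Finset.Icc 1 n, (μ d : ℝ) * ((n / d ^ 2 : ℕ) : ℝ) / n := by
      rw [hF]; simp only; rw [hswapR n, Finset.sum_div]
    have hsplit : F n - g n
        = ∑ d ∈ Finset.Icc 1 n,
            ((μ d : ℝ) * ((n / d ^ 2 : ℕ) : ℝ) / n - (μ d : ℝ) / (d : ℝ) ^ 2) := by
      rw [hFn, hg, Finset.sum_sub_distrib]
    have hicc : Finset.Icc 1 n = Finset.Ioc 0 n := by rw [← Finset.Icc_add_one_left_eq_Ioc]; rfl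
    rw [Real.norm_eq_abs, hsplit, hicc,
      ← Finset.sum_Ioc_consecutive _ (Nat.zero_le s) hsn]
    refine le_trans (abs_add_le _ _) ?_
    have hpart1 : |∑ d ∈ Finset.Ioc 0 s,
        ((μ d : ℝ) * ((n / d ^ 2 : ℕ) : ℝ) / n - (μ d : ℝ) / (d : ℝ) ^ 2)|
        ≤ ((s : ℝ)) / n := by
      refine le_trans (Finset.abs_sum_le_sum_abs _ _) ?_
      have : ∀ d ∈ Finset.Ioc 0 s,
          |(μ d : ℝ) * ((n / d ^ 2 : ℕ) : ℝ) / n - (μ d : ℝ) / (d : ℝ) ^ 2| ≤ 1 / n := by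
        intro d hd
        rw [Finset.mem_Ioc] at hd
        exact term_bound_small hn0 hd.1
      refine le_trans (Finset.sum_le_sum this) ?_
      rw [Finset.sum_const, Nat.card_Ioc, Nat.sub_zero, nsmul_eq_mul]
      rw [mul_one_div, div_le_div_iff₀ (by positivity) (by exact_mod_cast hn0)]
    have hpart2 : |∑ d ∈ Finset.Ioc s n,
        ((μ d : ℝ) * ((n / d ^ 2 : ℕ) : ℝ) / n - (μ d : ℝ) / (d : ℝ) ^ 2)|
        ≤ tailf (s + 1) := by
      refine le_trans (Finset.abs_sum_le_sum_abs _ _) (le_trans (Finset.sum_le_sum ?_) tail_le)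
      intro d hd
      rw [Finset.mem_Ioc] at hd
      have hd2 : n < d ^ 2 := Nat.sqrt_lt'.1 hd.1
      have hdiv : n / d ^ 2 = 0 := Nat.div_eq_of_lt hd2
      rw [hdiv]
      have hμ : |(μ d : ℝ)| ≤ 1 := by exact_mod_cast (abs_moebius_le_one (n := d))
      have hpos : (0 : ℝ) < (d : ℝ) ^ 2 := by
        have hd0 : 0 < d := lt_of_le_of_lt (Nat.zero_le s) hd.1
        positivity
      unfold cfun
      rw [Nat.cast_zero, mul_zero, zero_div, zero_sub, abs_neg, abs_div, abs_pow, Nat.abs_cast]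
      gcongr
    calc _ ≤ (s : ℝ) / n + tailf (s + 1) := add_le_add hpart1 hpart2
    _ = B n := rfl
  have hBt : Tendsto B atTop (𝓝 0) := by
    have h1 : Tendsto (fun n : ℕ => ((Nat.sqrt n : ℝ)) / n) atTop (𝓝 0) := by
      apply squeeze_zero' (Filter.Eventually.of_forall fun n => by positivity)
        ?_ (tendsto_one_div_atTop_nhds_zero_nat.comp sqrt_tendsto_atTop)
      filter_upwards [eventually_ge_atTop 1] with n hn
      have hn0 : (0 : ℝ) < (n : ℝ) := by exact_mod_cast hn
      have hs1 : 1 ≤ Nat.sqrt n := Nat.le_sqrt.2 (by omega)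
      have hs0 : (0 : ℝ) < (Nat.sqrt n : ℝ) := by exact_mod_cast hs1
      have hss : Nat.sqrt n * Nat.sqrt n ≤ n := Nat.sqrt_le n
      rw [Function.comp_apply, div_le_div_iff₀ hn0 hs0]
      have : ((Nat.sqrt n * Nat.sqrt n : ℕ) : ℝ) ≤ (n : ℝ) := by exact_mod_cast hss
      push_cast at this
      linarith
    have h2 : Tendsto (fun n : ℕ => tailf (Nat.sqrt n + 1)) atTop (𝓝 0) :=
      tail_tendsto.comp ((tendsto_add_atTop_nat 1).comp sqrt_tendsto_atTop)
    have := h1.add h2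
    simpa using this
  have hFg : Tendsto (fun n => F n - g n) atTop (𝓝 0) := squeeze_zero_norm' hdiff hBt
  have hgT : Tendsto g atTop (𝓝 (6 / π ^ 2)) := g_tendsto
  have hfinal := hgT.add hFg
  simp only [add_zero] at hfinal
  have heq : (fun n => g n + (F n - g n)) = F := by funext n; ring
  rw [heq] at hfinal
  exact hfinal
end

section
/- If there exists a constant C > 0 such that the Liouville summation function satisfies |L(x)| ≤ C·x^{1/2}·log x for all real x ≥ 2, then the Riemann hypothesis holds: every zero s of the Riemann zeta function with 0 < Re s < 1 satisfies Re s = 1/2. -/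
/-- The Liouville function `λ(k) = (-1)^Ω(k)`. -/
noncomputable def liouville (k : ℕ) : ℤ := (-1) ^ k.primeFactorsList.length

/-- The Liouville summation function `L(x) = ∑_{k ≤ x} λ(k)` for real `x`. -/
noncomputable def L (x : ℝ) : ℤ := ∑ k ∈ Finset.Icc 1 ⌊x⌋₊, liouville k

open MeasureTheory Complex Filter Set Asymptotics ArithmeticFunction

open scoped Classical in
noncomputable def lamAF : ArithmeticFunction ℂ :=
  ⟨fun n ↦ if n = 0 then 0 else ((_root_.liouville n : ℤ) : ℂ), by simp⟩

open scoped Classical in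
noncomputable def sqAF : ArithmeticFunction ℂ :=
  ⟨fun n ↦ if IsSquare n ∧ n ≠ 0 then 1 else 0, by simp⟩

lemma lamAF_apply {n : ℕ} (hn : n ≠ 0) : lamAF n = ((_root_.liouville n : ℤ) : ℂ) := by
  simp [lamAF, hn, ArithmeticFunction.coe_mk]

lemma sqAF_apply {n : ℕ} (hn : n ≠ 0) :
    sqAF n = if IsSquare n then 1 else 0 := by
  simp only [sqAF, ArithmeticFunction.coe_mk, hn, ne_eq, not_false_eq_true, and_true]

lemma norm_lamAF_le (n : ℕ) : ‖lamAF n‖ ≤ 1 := by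
  rcases eq_or_ne n 0 with rfl | hn
  · simp [lamAF, ArithmeticFunction.coe_mk]
  · rw [lamAF_apply hn]
    simp [_root_.liouville]

lemma nat_isSquare_iff {n : ℕ} (hn : n ≠ 0) :
    IsSquare n ↔ ∀ p, Even (n.factorization p) := by
  constructor
  · rintro ⟨r, rfl⟩ p
    have hr : r ≠ 0 := by rintro rfl; simp at hn
    rw [Nat.factorization_mul hr hr, Finsupp.add_apply]
    exact ⟨_, rfl⟩
  · intro h
    refine ⟨n.factorization.prod fun p k ↦ p ^ (k / 2), ?_⟩
    conv_lhs => rw [← Nat.factorization_prod_pow_eq_self hn]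
    rw [Finsupp.prod, Finsupp.prod, ← Finset.prod_mul_distrib]
    refine Finset.prod_congr rfl fun p _ ↦ ?_
    obtain ⟨c, hc⟩ := h p
    rw [← pow_add]
    congr 1
    omega

lemma isSquare_prime_pow_iff {p k : ℕ} (hp : p.Prime) : IsSquare (p ^ k) ↔ Even k := by
  rw [nat_isSquare_iff (pow_ne_zero _ hp.pos.ne')]
  constructor
  · intro h
    have := h p
    rwa [hp.factorization_pow, Finsupp.single_apply, if_pos rfl] at this
  · intro hk q
    rw [hp.factorization_pow, Finsupp.single_apply]
    split <;> simp [hk]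

lemma isSquare_mul_iff_coprime {m n : ℕ} (h : m.Coprime n) (hm : m ≠ 0) (hn : n ≠ 0) :
    IsSquare (m * n) ↔ IsSquare m ∧ IsSquare n := by
  have key : ∀ p, (m * n).factorization p = m.factorization p + n.factorization p := by
    intro p
    rw [Nat.factorization_mul hm hn, Finsupp.add_apply]
  rw [nat_isSquare_iff (mul_ne_zero hm hn), nat_isSquare_iff hm, nat_isSquare_iff hn]
  constructor
  · intro H
    constructor
    · intro p
      rcases Nat.eq_zero_or_pos (m.factorization p) with h0 | hpos
      · simp [h0]
      · have hpm : p ∣ m := Nat.dvd_of_factorization_pos hpos.ne'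
        have hpn : ¬ p ∣ n := by
          intro hd
          have hp : p.Prime := Nat.prime_of_mem_primeFactors (by
            rw [← Nat.support_factorization]; exact Finsupp.mem_support_iff.mpr hpos.ne')
          exact hp.one_lt.ne' (Nat.eq_one_of_dvd_coprimes h hpm hd)
        have h0 : n.factorization p = 0 := Nat.factorization_eq_zero_of_not_dvd hpn
        have := H p
        rwa [key, h0, add_zero] at this
    · intro p
      rcases Nat.eq_zero_or_pos (n.factorization p) with h0 | hpos
      · simp [h0]
      · have hpn : p ∣ n := Nat.dvd_of_factorization_pos hpos.ne'
        have hpm : ¬ p ∣ m := by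
          intro hd
          have hp : p.Prime := Nat.prime_of_mem_primeFactors (by
            rw [← Nat.support_factorization]; exact Finsupp.mem_support_iff.mpr hpos.ne')
          exact hp.one_lt.ne' (Nat.eq_one_of_dvd_coprimes h hd hpn)
        have h0 : m.factorization p = 0 := Nat.factorization_eq_zero_of_not_dvd hpm
        have := H p
        rwa [key, h0, zero_add] at this
  · rintro ⟨h1, h2⟩ p
    rw [key]
    exact (h1 p).add (h2 p)

lemma isMultiplicative_lamAF : lamAF.IsMultiplicative := by
  refine ⟨by simp [lamAF_apply one_ne_zero, _root_.liouville], ?_⟩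
  intro m n h
  rcases eq_or_ne m 0 with rfl | hm
  · rcases Nat.coprime_zero_left n |>.mp h with rfl
    simp [lamAF, ArithmeticFunction.coe_mk, lamAF_apply one_ne_zero, _root_.liouville]
  rcases eq_or_ne n 0 with rfl | hn
  · rcases Nat.coprime_zero_right m |>.mp h with rfl
    simp [lamAF, ArithmeticFunction.coe_mk, lamAF_apply one_ne_zero, _root_.liouville]
  rw [lamAF_apply (mul_ne_zero hm hn), lamAF_apply hm, lamAF_apply hn]
  have : _root_.liouville (m * n) = _root_.liouville m * _root_.liouville n := by
    unfold _root_.liouville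
    rw [← pow_add]
    congr 1
    have := ArithmeticFunction.cardFactors_mul hm hn
    simpa [ArithmeticFunction.cardFactors_apply] using this
  rw [this]
  push_cast
  ring

lemma isMultiplicative_sqAF : sqAF.IsMultiplicative := by
  refine ⟨by simp [sqAF_apply one_ne_zero], ?_⟩
  intro m n h
  rcases eq_or_ne m 0 with rfl | hm
  · rcases Nat.coprime_zero_left n |>.mp h with rfl
    simp [sqAF, ArithmeticFunction.coe_mk]
  rcases eq_or_ne n 0 with rfl | hn
  · rcases Nat.coprime_zero_right m |>.mp h with rfl
    simp [sqAF, ArithmeticFunction.coe_mk]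
  rw [sqAF_apply (mul_ne_zero hm hn), sqAF_apply hm, sqAF_apply hn]
  by_cases h1 : IsSquare m <;> by_cases h2 : IsSquare n <;>
    simp [h1, h2, isSquare_mul_iff_coprime h hm hn]

lemma lamAF_mul_zeta : lamAF * (ArithmeticFunction.zeta : ArithmeticFunction ℂ) = sqAF := by
  rw [ArithmeticFunction.IsMultiplicative.eq_iff_eq_on_prime_powers _
    (isMultiplicative_lamAF.mul (isMultiplicative_zeta.natCast)) _ isMultiplicative_sqAF]
  intro p k hp
  rw [ArithmeticFunction.coe_mul_zeta_apply, Nat.divisors_prime_pow hp, Finset.sum_map]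
  have hterm : ∀ i, lamAF (p ^ i) = (-1 : ℂ) ^ i := by
    intro i
    rw [lamAF_apply (pow_ne_zero _ hp.pos.ne')]
    have : _root_.liouville (p ^ i) = (-1) ^ i := by
      unfold _root_.liouville
      congr 1
      simpa [ArithmeticFunction.cardFactors_apply] using
        ArithmeticFunction.cardFactors_apply_prime_pow (k := i) hp
    rw [this]
    push_cast
    ring
  simp only [Function.Embedding.coeFn_mk, hterm]
  rw [neg_one_geom_sum, sqAF_apply (pow_ne_zero _ hp.pos.ne')]
  by_cases hk : Even k <;>
    simp [hk, Nat.even_add_one, isSquare_prime_pow_iff hp]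

lemma two_mul_re (s : ℂ) : (2 * s).re = 2 * s.re := by simp [Complex.mul_re]

lemma LSeriesSummable_lamAF {s : ℂ} (hs : 1 < s.re) : LSeriesSummable (fun n ↦ lamAF n) s :=
  LSeriesSummable_of_bounded_of_one_lt_re (m := 1) (fun n _ ↦ norm_lamAF_le n) hs

lemma LSeries_sqAF {s : ℂ} (hs : 1 < s.re) :
    LSeries (fun n ↦ sqAF n) s = riemannZeta (2 * s) := by
  have h2s : 1 < (2 * s).re := by rw [two_mul_re]; linarith
  rw [← LSeries_one_eq_riemannZeta h2s]
  have hinj : Function.Injective (fun m : ℕ ↦ m ^ 2) := Nat.pow_left_injective two_ne_zero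
  have hsupp : Function.support (LSeries.term (fun n ↦ sqAF n) s) ⊆
      Set.range (fun m : ℕ ↦ m ^ 2) := by
    intro n hn
    have hn0 : n ≠ 0 := by
      rintro rfl
      simp [LSeries.term_zero] at hn
    have hsq : IsSquare n := by
      by_contra hc
      apply hn
      rw [LSeries.term_of_ne_zero hn0, sqAF_apply hn0, if_neg hc]
      simp
    obtain ⟨r, hr⟩ := hsq
    exact ⟨r, by simp [hr, sq]⟩
  rw [LSeries, LSeries, ← hinj.tsum_eq hsupp]
  refine tsum_congr fun m ↦ ?_
  rcases eq_or_ne m 0 with rfl | hm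
  · simp [LSeries.term_zero]
  have hm2 : (m : ℕ) ^ 2 ≠ 0 := pow_ne_zero _ hm
  rw [LSeries.term_of_ne_zero hm2, LSeries.term_of_ne_zero hm,
    sqAF_apply hm2, if_pos ⟨m, (sq m)⟩]
  have hcast : ((m ^ 2 : ℕ) : ℂ) ^ s = (m : ℂ) ^ (2 * s) := by
    have h1 : ((m ^ 2 : ℕ) : ℂ) = ((m : ℝ) : ℂ) * ((m : ℝ) : ℂ) := by push_cast; ring
    rw [h1, mul_cpow_ofReal_nonneg (Nat.cast_nonneg m) (Nat.cast_nonneg m), two_mul,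
      show ((m:ℂ)) = ((m:ℝ):ℂ) by push_cast; rfl,
      cpow_add _ _ (by exact_mod_cast hm : ((m : ℝ) : ℂ) ≠ 0)]
  rw [hcast]
  simp [Pi.one_apply]

lemma key_identity {s : ℂ} (hs : 1 < s.re) :
    LSeries (fun n ↦ lamAF n) s * riemannZeta s = riemannZeta (2 * s) := by
  have hz : LSeriesSummable (fun n ↦ ((ArithmeticFunction.zeta n : ℕ) : ℂ)) s :=
    LSeriesSummable_zeta_iff.mpr hs
  have hz' : LSeriesSummable (fun n ↦ ((ArithmeticFunction.zeta : ArithmeticFunction ℂ) n)) s := by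
    refine hz.congr fun n ↦ ?_
    simp [ArithmeticFunction.natCoe_apply]
  have hm := ArithmeticFunction.LSeries_mul' (f := lamAF)
    (g := (ArithmeticFunction.zeta : ArithmeticFunction ℂ))
    (LSeriesSummable_lamAF hs) hz'
  have hzeta : LSeries (fun n ↦ ((ArithmeticFunction.zeta : ArithmeticFunction ℂ) n)) s
      = riemannZeta s := by
    rw [← LSeries_zeta_eq_riemannZeta hs]
    refine LSeries_congr (fun _ ↦ ?_) s
    simp [ArithmeticFunction.natCoe_apply]
  rw [← hzeta, ← hm, lamAF_mul_zeta, LSeries_sqAF hs]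

noncomputable def Lc : ℝ → ℂ := fun t ↦ (L t : ℂ)

noncomputable def FL : ℂ → ℂ := fun s ↦ s * mellin Lc (-s)

lemma Lc_zero {t : ℝ} (ht : t < 1) : Lc t = 0 := by
  have : ⌊t⌋₊ = 0 := Nat.floor_eq_zero.mpr ht
  simp [Lc, L, this]

lemma norm_Lc_le (t : ℝ) : ‖Lc t‖ ≤ |t| + 1 := by
  have h1 : ‖Lc t‖ = |(L t : ℝ)| := by
    rw [Lc, show ((L t : ℤ) : ℂ) = (((L t : ℤ) : ℝ) : ℂ) by push_cast; rfl,
      Complex.norm_real]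
    rfl
  have h2 : |(L t : ℝ)| ≤ (⌊t⌋₊ : ℝ) := by
    rw [L]
    push_cast
    refine (Finset.abs_sum_le_sum_abs (fun k : ℕ ↦ ((_root_.liouville k : ℤ) : ℝ)) _).trans ?_
    have : ∀ k ∈ Finset.Icc 1 ⌊t⌋₊, |((_root_.liouville k : ℤ) : ℝ)| ≤ 1 := by
      intro k _
      simp [_root_.liouville, abs_pow]
    refine (Finset.sum_le_sum this).trans ?_
    simp [Nat.card_Icc]
  rw [h1]
  refine h2.trans ?_
  rcases le_or_gt 0 t with ht | ht
  · have := Nat.floor_le ht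
    rw [_root_.abs_of_nonneg ht]; linarith
  · simp [Nat.floor_eq_zero.mpr (by linarith : t < 1)]
    positivity

lemma Lc_measurable : Measurable Lc := by
  have : Lc = (fun n : ℕ ↦ ((∑ k ∈ Finset.Icc 1 n, _root_.liouville k : ℤ) : ℂ)) ∘ Nat.floor := rfl
  rw [this]
  exact measurable_from_nat.comp Nat.measurable_floor

lemma Lc_locInt : LocallyIntegrableOn Lc (Set.Ioi 0) := by
  have h : LocallyIntegrable Lc := by
    rw [locallyIntegrable_iff]
    intro K hK
    have hcont : Continuous fun t : ℝ ↦ |t| + 1 := continuous_abs.add continuous_const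
    refine Integrable.mono' (hcont.continuousOn.integrableOn_compact hK)
      Lc_measurable.aestronglyMeasurable ?_
    exact ae_of_all _ fun t ↦ norm_Lc_le t
  exact h.locallyIntegrableOn _

variable {C : ℝ}

lemma Lc_bound' (hC : 0 < C)
    (hL : ∀ x : ℝ, 2 ≤ x → |(L x : ℝ)| ≤ C * x ^ ((1 : ℝ) / 2) * Real.log x)
    {ε : ℝ} (hε : 0 < ε) :
    ∃ D : ℝ, ∀ t : ℝ, 1 ≤ t → ‖Lc t‖ ≤ D * t ^ (1 / 2 + ε) := by
  refine ⟨max (C / ε) 1, ?_⟩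
  intro t ht
  have ht0 : 0 < t := by linarith
  have hrpow1 : (1 : ℝ) ≤ t ^ ((1:ℝ) / 2 + ε) := Real.one_le_rpow ht (by linarith)
  have hnorm : ‖Lc t‖ = |(L t : ℝ)| := by
    rw [Lc, show ((L t : ℤ) : ℂ) = (((L t : ℤ) : ℝ) : ℂ) by push_cast; rfl, Complex.norm_real]
    rfl
  rcases le_or_gt 2 t with h2 | h2
  · have hlog : Real.log t ≤ t ^ ε / ε := by
      have h1 : Real.log (t ^ ε) ≤ t ^ ε - 1 :=
        Real.log_le_sub_one_of_pos (Real.rpow_pos_of_pos ht0 ε)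
      rw [Real.log_rpow ht0] at h1
      have : ε * Real.log t ≤ t ^ ε := by nlinarith [Real.rpow_pos_of_pos ht0 ε]
      calc Real.log t = ε * Real.log t / ε := by field_simp
      _ ≤ t ^ ε / ε := by gcongr
  -- combine
    rw [hnorm]
    refine (hL t h2).trans ?_
    have hsplit : t ^ ((1:ℝ)/2 + ε) = t ^ ((1:ℝ)/2) * t ^ ε := Real.rpow_add ht0 _ _
    have hb : C * t ^ ((1:ℝ)/2) * Real.log t ≤ (C / ε) * t ^ ((1:ℝ)/2 + ε) := by
      rw [hsplit]
      have h3 : C * t ^ ((1:ℝ)/2) * Real.log t ≤ C * t ^ ((1:ℝ)/2) * (t ^ ε / ε) := by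
        have hpos : 0 ≤ C * t ^ ((1:ℝ)/2) := by positivity
        exact mul_le_mul_of_nonneg_left hlog hpos
      calc C * t ^ ((1:ℝ)/2) * Real.log t ≤ C * t ^ ((1:ℝ)/2) * (t ^ ε / ε) := h3
      _ = (C / ε) * (t ^ ((1:ℝ)/2) * t ^ ε) := by ring
    refine hb.trans ?_
    have : (0:ℝ) ≤ t ^ ((1:ℝ)/2 + ε) := by positivity
    exact mul_le_mul_of_nonneg_right (le_max_left _ _) this
  · -- 1 ≤ t < 2 : L t = _root_.liouville 1 = 1
    have hfloor : ⌊t⌋₊ = 1 := by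
      rw [Nat.floor_eq_iff (by linarith)]
      constructor <;> [exact_mod_cast ht; exact_mod_cast h2]
    have : L t = 1 := by simp [L, hfloor, _root_.liouville]
    rw [hnorm, this]
    have h1 : (1:ℝ) ≤ max (C / ε) 1 := le_max_right _ _
    have h0 : (0:ℝ) ≤ t ^ ((1:ℝ)/2 + ε) := by positivity
    have : (1:ℝ) ≤ max (C / ε) 1 * t ^ (1/2 + ε) := by nlinarith
    simpa using this

variable {C : ℝ}

lemma Lc_bigO_top (hC : 0 < C)
    (hL : ∀ x : ℝ, 2 ≤ x → |(L x : ℝ)| ≤ C * x ^ ((1 : ℝ) / 2) * Real.log x)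
    {ε : ℝ} (hε : 0 < ε) :
    Lc =O[atTop] (fun t : ℝ ↦ t ^ (-(-((1:ℝ)/2 + ε)))) := by
  obtain ⟨D, hD⟩ := Lc_bound' hC hL hε
  refine IsBigO.of_bound D ?_
  filter_upwards [eventually_ge_atTop (1:ℝ)] with t ht
  rw [neg_neg]
  have h := hD t ht
  rwa [Real.norm_of_nonneg (Real.rpow_nonneg (by linarith) _)]

lemma Lc_bigO_zero (b : ℝ) : Lc =O[nhdsWithin 0 (Set.Ioi 0)] (fun t : ℝ ↦ t ^ (-b)) := by
  refine IsBigO.of_bound 0 ?_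
  filter_upwards [Ioo_mem_nhdsGT_of_mem (by constructor <;> norm_num : (0:ℝ) ∈ Ico (0:ℝ) 1)]
    with t ht
  rw [Lc_zero ht.2]
  simp

lemma FL_differentiableAt (hC : 0 < C)
    (hL : ∀ x : ℝ, 2 ≤ x → |(L x : ℝ)| ≤ C * x ^ ((1 : ℝ) / 2) * Real.log x)
    {s : ℂ} (hs : 1 / 2 < s.re) : DifferentiableAt ℂ FL s := by
  set ε : ℝ := (s.re - 1/2) / 2 with hε
  have hε0 : 0 < ε := by rw [hε]; linarith
  have hmel : DifferentiableAt ℂ (mellin Lc) (-s) := by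
    refine mellin_differentiableAt_of_isBigO_rpow (a := -((1:ℝ)/2 + ε)) (b := -s.re - 1)
      Lc_locInt (Lc_bigO_top hC hL hε0) ?_ (Lc_bigO_zero _) ?_
    · rw [Complex.neg_re]; rw [hε]; linarith
    · rw [Complex.neg_re]; linarith
  have h2 : DifferentiableAt ℂ (fun z : ℂ ↦ mellin Lc (-z)) s := by
    have := hmel.comp s (differentiableAt_id.neg (𝕜 := ℂ))
    exact this
  exact differentiableAt_id.mul h2

lemma mellin_convergent_Lc (hC : 0 < C)
    (hL : ∀ x : ℝ, 2 ≤ x → |(L x : ℝ)| ≤ C * x ^ ((1 : ℝ) / 2) * Real.log x)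
    {s : ℂ} (hs : 1 / 2 < s.re) : MellinConvergent Lc (-s) := by
  set ε : ℝ := (s.re - 1/2) / 2 with hε
  have hε0 : 0 < ε := by rw [hε]; linarith
  refine mellinConvergent_of_isBigO_rpow (a := -((1:ℝ)/2 + ε)) (b := -s.re - 1)
    Lc_locInt (Lc_bigO_top hC hL hε0) ?_ (Lc_bigO_zero _) ?_
  · rw [Complex.neg_re]; rw [hε]; linarith
  · rw [Complex.neg_re]; linarith

lemma integrable_Lc_cpow (hC : 0 < C)
    (hL : ∀ x : ℝ, 2 ≤ x → |(L x : ℝ)| ≤ C * x ^ ((1 : ℝ) / 2) * Real.log x)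
    {s : ℂ} (hs : 1 / 2 < s.re) :
    IntegrableOn (fun t : ℝ ↦ (t : ℂ) ^ (-s - 1) * Lc t) (Set.Ioi 1) := by
  have h := mellin_convergent_Lc hC hL hs
  unfold MellinConvergent at h
  have h2 : IntegrableOn (fun t : ℝ ↦ (t : ℂ) ^ (-s - 1) • Lc t) (Set.Ioi 1) :=
    (h.mono_set (Set.Ioi_subset_Ioi zero_le_one)).congr_fun
      (fun t _ ↦ by norm_num) measurableSet_Ioi
  simpa [smul_eq_mul] using h2

lemma FL_eq_integral (hC : 0 < C)
    (hL : ∀ x : ℝ, 2 ≤ x → |(L x : ℝ)| ≤ C * x ^ ((1 : ℝ) / 2) * Real.log x)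
    {s : ℂ} (hs : 1 / 2 < s.re) :
    FL s = s * ∫ t in Set.Ioi (1:ℝ), (t : ℂ) ^ (-s - 1) * Lc t := by
  unfold FL
  congr 1
  unfold mellin
  have hsplit : Set.Ioi (0:ℝ) = Set.Ioc 0 1 ∪ Set.Ioi 1 :=
    (Set.Ioc_union_Ioi_eq_Ioi zero_le_one).symm
  have h := mellin_convergent_Lc hC hL hs
  unfold MellinConvergent at h
  rw [hsplit] at h ⊢
  rw [setIntegral_union (Set.Ioc_disjoint_Ioi le_rfl) measurableSet_Ioi
    (h.mono_set Set.subset_union_left) (h.mono_set Set.subset_union_right)]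
  have hzero : ∫ t in Set.Ioc (0:ℝ) 1, (t : ℂ) ^ (-s - 1) • Lc t = 0 := by
    rw [integral_Ioc_eq_integral_Ioo]
    rw [setIntegral_congr_fun measurableSet_Ioo (g := fun _ ↦ (0:ℂ))
      (fun t ht ↦ by rw [Lc_zero ht.2]; simp)]
    simp
  rw [hzero, zero_add]
  simp_rw [smul_eq_mul]

lemma lamAF_zero : lamAF 0 = 0 := by simp [lamAF, ArithmeticFunction.coe_mk]

lemma lamAF_sum (t : ℝ) : ∑ k ∈ Finset.Icc 0 ⌊t⌋₊, lamAF k = Lc t := by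
  rw [Finset.Icc_eq_cons_Ioc (Nat.zero_le _), Finset.sum_cons, lamAF_zero, zero_add]
  have hIoc : Finset.Ioc 0 ⌊t⌋₊ = Finset.Icc 1 ⌊t⌋₊ := by
    ext k; simp; omega
  rw [hIoc, Lc, L]
  push_cast
  refine Finset.sum_congr rfl fun k hk ↦ ?_
  have hk0 : k ≠ 0 := by
    have := (Finset.mem_Icc.mp hk).1
    omega
  rw [lamAF_apply hk0]

lemma hasDerivAt_cpow_neg {s : ℂ} (hs0 : s ≠ 0) {x : ℝ} (hx : 0 < x) :
    HasDerivAt (fun t : ℝ ↦ (t : ℂ) ^ (-s)) (-s * (x : ℂ) ^ (-s - 1)) x := by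
  have hr : (-s - 1 : ℂ) ≠ -1 := by
    intro H
    apply hs0
    have : -s = 0 := by linear_combination H
    linear_combination -this
  have h := hasDerivAt_ofReal_cpow_const' (ne_of_gt hx) hr
  have h2 : HasDerivAt (fun y : ℝ ↦ (-s) * ((y:ℂ) ^ (-s - 1 + 1) / (-s - 1 + 1)))
      ((-s) * (x:ℂ) ^ (-s - 1)) x := h.const_mul (-s)
  have heq : (fun y : ℝ ↦ (-s) * ((y:ℂ) ^ (-s - 1 + 1) / (-s - 1 + 1)))
      = fun y : ℝ ↦ (y : ℂ) ^ (-s) := by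
    funext y
    have : (-s - 1 + 1 : ℂ) = -s := by ring
    rw [this]
    field_simp
  rwa [heq] at h2

lemma deriv_cpow_neg {s : ℂ} (hs0 : s ≠ 0) {x : ℝ} (hx : 0 < x) :
    deriv (fun t : ℝ ↦ (t : ℂ) ^ (-s)) x = -s * (x : ℂ) ^ (-s - 1) :=
  (hasDerivAt_cpow_neg hs0 hx).deriv

lemma abel_step {s : ℂ} (hs0 : s ≠ 0) (N : ℕ) :
    ∑ k ∈ Finset.Icc 0 N, ((k : ℂ) ^ (-s) * lamAF k) =
      ((N : ℝ) : ℂ) ^ (-s) * Lc N -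
        ∫ t in Set.Ioc (1:ℝ) (N : ℝ), (-s * (t : ℂ) ^ (-s - 1)) * Lc t := by
  have hc0 : lamAF 0 = 0 := by
    have h0 := lamAF_sum 0
    rw [Lc_zero (by norm_num : (0:ℝ) < 1)] at h0
    simpa using h0
  have habel := sum_mul_eq_sub_integral_mul₀ (f := fun t : ℝ ↦ (t : ℂ) ^ (-s))
    (fun n ↦ lamAF n) hc0 (N : ℝ)
    (fun t ht ↦ (hasDerivAt_cpow_neg hs0 (by linarith [ht.1] : (0:ℝ) < t)).differentiableAt)
    ?hint
  case hint =>
    refine IntegrableOn.congr_fun ?_ (fun t ht ↦ (deriv_cpow_neg hs0 (by linarith [ht.1])).symm)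
      measurableSet_Icc
    refine ContinuousOn.integrableOn_Icc ?_
    refine ContinuousOn.mul continuousOn_const ?_
    intro t ht
    exact (Complex.continuousAt_ofReal_cpow_const t _
      (Or.inr (by linarith [ht.1] : t ≠ 0))).continuousWithinAt
  rw [Nat.floor_natCast] at habel
  have hsumN : ∑ k ∈ Finset.Icc 0 N, lamAF k = Lc (N : ℝ) := by
    simpa [Nat.floor_natCast] using lamAF_sum (N : ℝ)
  have hLHS : ∑ k ∈ Finset.Icc 0 N, ((k : ℂ) ^ (-s) * lamAF k)
      = ∑ k ∈ Finset.Icc 0 N, (((k : ℝ) : ℂ) ^ (-s) * lamAF k) := by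
    refine Finset.sum_congr rfl fun k _ ↦ by norm_num
  rw [hLHS, habel, hsumN]
  congr 1
  refine setIntegral_congr_fun measurableSet_Ioc fun t ht ↦ ?_
  rw [deriv_cpow_neg hs0 (by linarith [ht.1] : (0:ℝ) < t), lamAF_sum]

lemma LSeries_lamAF_eq_FL (hC : 0 < C)
    (hL : ∀ x : ℝ, 2 ≤ x → |(L x : ℝ)| ≤ C * x ^ ((1 : ℝ) / 2) * Real.log x)
    {s : ℂ} (hs : 1 < s.re) :
    LSeries (fun n ↦ lamAF n) s = FL s := by
  have hs0 : s ≠ 0 := by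
    intro h
    rw [h] at hs
    simp at hs
    linarith
  have hs12 : 1 / 2 < s.re := by linarith
  have hsummable : LSeriesSummable (fun n ↦ lamAF n) s :=
    LSeriesSummable_of_bounded_of_one_lt_re (m := 1) (fun n _ ↦ norm_lamAF_le n) hs
  -- T1 : partial sums tend to LSeries
  have hterm : ∀ k : ℕ, LSeries.term (fun n ↦ lamAF n) s k = (k : ℂ) ^ (-s) * lamAF k := by
    intro k
    rcases eq_or_ne k 0 with rfl | hk
    · rw [LSeries.term_zero, ArithmeticFunction.map_zero]; ring
    · rw [LSeries.term_of_ne_zero hk, Complex.cpow_neg, div_eq_mul_inv, mul_comm]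
  have T1 : Tendsto (fun N : ℕ ↦ ∑ k ∈ Finset.Icc 0 N, ((k : ℂ) ^ (-s) * lamAF k)) atTop
      (nhds (LSeries (fun n ↦ lamAF n) s)) := by
    have h := hsummable.hasSum.tendsto_sum_nat
    have h2 := h.comp (tendsto_add_atTop_nat 1)
    refine h2.congr fun N ↦ ?_
    rw [Function.comp_apply]
    have : Finset.range (N + 1) = Finset.Icc 0 N := by
      ext k; simp
    rw [this]
    exact Finset.sum_congr rfl fun k _ ↦ hterm k
  -- T2 : boundary term tends to 0
  have T2 : Tendsto (fun N : ℕ ↦ ((N : ℝ) : ℂ) ^ (-s) * Lc N) atTop (nhds 0) := by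
    set ε : ℝ := (1:ℝ)/8 with hεdef
    have hε : (0:ℝ) < ε := by norm_num
    obtain ⟨D, hD⟩ := Lc_bound' hC hL hε
    have hbound : ∀ N : ℕ, ‖((N : ℝ) : ℂ) ^ (-s) * Lc N‖
        ≤ D * (N : ℝ) ^ (1/2 + ε - s.re) := by
      intro N
      rcases Nat.eq_zero_or_pos N with rfl | hN
      · simp only [Nat.cast_zero]
        rw [Lc_zero (by norm_num : (0:ℝ) < 1), mul_zero, norm_zero]
        rw [Real.zero_rpow (by norm_num [hεdef]; intro h; linarith : 1/2 + ε - s.re ≠ 0)]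
        simp
      · have hN1 : (1:ℝ) ≤ (N:ℝ) := by exact_mod_cast hN
        have hNpos : (0:ℝ) < N := by linarith
        rw [norm_mul]
        have h1 : ‖((N : ℝ) : ℂ) ^ (-s)‖ = (N : ℝ) ^ (-s.re) := by
          rw [show (((N:ℝ)):ℂ) = ((N:ℕ):ℂ) by push_cast; rfl]
          rw [Complex.norm_natCast_cpow_of_pos hN]
          simp
        rw [h1]
        calc (N:ℝ) ^ (-s.re) * ‖Lc N‖ ≤ (N:ℝ) ^ (-s.re) * (D * (N:ℝ) ^ (1/2 + ε)) := by
              have := hD (N : ℝ) hN1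
              exact mul_le_mul_of_nonneg_left this (Real.rpow_nonneg hNpos.le _)
        _ = D * ((N:ℝ) ^ (-s.re) * (N:ℝ) ^ (1/2 + ε)) := by ring
        _ = D * (N : ℝ) ^ (1/2 + ε - s.re) := by
              rw [← Real.rpow_add hNpos]; ring_nf
    refine squeeze_zero_norm hbound ?_
    have hlim : Tendsto (fun x : ℝ ↦ x ^ (-(s.re - 1/2 - ε))) atTop (nhds 0) :=
      tendsto_rpow_neg_atTop (by norm_num [hεdef]; linarith)
    have hlim2 := (hlim.comp
      (tendsto_natCast_atTop_atTop : Tendsto (Nat.cast : ℕ → ℝ) atTop atTop)).const_mul D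
    rw [mul_zero] at hlim2
    refine hlim2.congr fun N ↦ ?_
    simp only [Function.comp_apply]
    ring_nf
  -- T3 : integral tends to full integral
  have hint : IntegrableOn (fun t : ℝ ↦ (-s * (t : ℂ) ^ (-s - 1)) * Lc t) (Set.Ioi 1) := by
    have h0 := (integrable_Lc_cpow hC hL hs12).const_mul (-s)
    exact IntegrableOn.congr_fun h0 (fun t _ ↦ by ring) measurableSet_Ioi
  have T3 : Tendsto (fun N : ℕ ↦ ∫ t in Set.Ioc (1:ℝ) (N:ℝ), (-s * (t : ℂ) ^ (-s - 1)) * Lc t)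
      atTop (nhds (∫ t in Set.Ioi (1:ℝ), (-s * (t : ℂ) ^ (-s - 1)) * Lc t)) := by
    have h := intervalIntegral_tendsto_integral_Ioi (f := fun t : ℝ ↦ (-s * (t : ℂ) ^ (-s - 1)) * Lc t) 1 hint
      (tendsto_natCast_atTop_atTop : Tendsto (Nat.cast : ℕ → ℝ) atTop atTop)
    refine (h.congr' ?_)
    filter_upwards [eventually_ge_atTop 1] with N hN
    rw [intervalIntegral.integral_of_le (by exact_mod_cast hN)]
  -- combine
  have Tcomb : Tendsto (fun N : ℕ ↦ ∑ k ∈ Finset.Icc 0 N, ((k : ℂ) ^ (-s) * lamAF k)) atTop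
      (nhds (0 - ∫ t in Set.Ioi (1:ℝ), (-s * (t : ℂ) ^ (-s - 1)) * Lc t)) := by
    have := T2.sub T3
    refine this.congr fun N ↦ (abel_step hs0 N).symm
  have hval := tendsto_nhds_unique T1 Tcomb
  rw [hval, FL_eq_integral hC hL hs12, zero_sub, ← integral_neg]
  have heq : (fun t : ℝ ↦ -(-s * (t:ℂ) ^ (-s - 1) * Lc t))
      = fun t : ℝ ↦ s • ((t:ℂ) ^ (-s - 1) * Lc t) := by
    funext t
    simp only [smul_eq_mul]
    ring
  rw [heq, integral_smul, smul_eq_mul]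

lemma two_mul_re' (s : ℂ) : (2 * s).re = 2 * s.re := by simp [Complex.mul_re]

lemma isPreconnected_U {sg : ℝ} (hsg1 : sg < 1) :
    IsPreconnected {s : ℂ | sg < s.re ∧ s ≠ 1} := by
  set A : Set ℂ := {s | sg < s.re ∧ 0 < s.im} with hA
  set B : Set ℂ := {s | sg < s.re ∧ s.im < 0} with hB
  set Cs : Set ℂ := {s | 1 < s.re} with hCs
  set D : Set ℂ := {s | sg < s.re ∧ s.re < 1} with hD
  have hAc : IsPreconnected A :=
    ((convex_halfSpace_re_gt sg).inter (convex_halfSpace_im_gt 0)).isPreconnected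
  have hBc : IsPreconnected B :=
    ((convex_halfSpace_re_gt sg).inter (convex_halfSpace_im_lt 0)).isPreconnected
  have hCc : IsPreconnected Cs := (convex_halfSpace_re_gt 1).isPreconnected
  have hDc : IsPreconnected D :=
    ((convex_halfSpace_re_gt sg).inter (convex_halfSpace_re_lt 1)).isPreconnected
  have h1 : IsPreconnected (A ∪ Cs) := by
    refine IsPreconnected.union (2 + I) ?_ ?_ hAc hCc
    · refine ⟨?_, ?_⟩ <;> simp <;> linarith
    · show (1:ℝ) < ((2:ℂ) + I).re
      simp
  have h2 : IsPreconnected (A ∪ Cs ∪ B) := by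
    refine IsPreconnected.union (2 - I) ?_ ?_ h1 hBc
    · refine Or.inr ?_
      show (1:ℝ) < ((2:ℂ) - I).re
      simp
    · refine ⟨?_, ?_⟩ <;> simp <;> linarith
  have h3 : IsPreconnected (A ∪ Cs ∪ B ∪ D) := by
    refine IsPreconnected.union (((sg + 1) / 2 : ℝ) + I) ?_ ?_ h2 hDc
    · refine Or.inl (Or.inl ?_)
      refine ⟨?_, ?_⟩ <;> simp <;> linarith
    · refine ⟨?_, ?_⟩ <;> simp <;> linarith
  have hU : {s : ℂ | sg < s.re ∧ s ≠ 1} = A ∪ Cs ∪ B ∪ D := by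
    ext s
    simp only [mem_setOf_eq, mem_union, hA, hB, hCs, hD]
    constructor
    · rintro ⟨hsg, hne⟩
      rcases lt_trichotomy s.im 0 with him | him | him
      · exact Or.inl (Or.inr ⟨hsg, him⟩)
      · rcases lt_trichotomy s.re 1 with hre | hre | hre
        · exact Or.inr ⟨hsg, hre⟩
        · exact absurd (Complex.ext hre him) hne
        · exact Or.inl (Or.inl (Or.inr hre))
      · exact Or.inl (Or.inl (Or.inl ⟨hsg, him⟩))
    · rintro ((( ⟨h1', h2'⟩ | h ) | ⟨h1', h2'⟩) | ⟨h1', h2'⟩)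
      · exact ⟨h1', fun hc ↦ by rw [hc] at h2'; simp at h2'⟩
      · exact ⟨by linarith, fun hc ↦ by rw [hc] at h; simp at h⟩
      · exact ⟨h1', fun hc ↦ by rw [hc] at h2'; simp at h2'⟩
      · exact ⟨h1', fun hc ↦ by rw [hc] at h2'; simp at h2'⟩
  rw [hU]
  exact h3

variable {C : ℝ}

lemma FL_mul_zeta (hC : 0 < C)
    (hL : ∀ x : ℝ, 2 ≤ x → |(L x : ℝ)| ≤ C * x ^ ((1 : ℝ) / 2) * Real.log x)
    {s : ℂ} (hs : 1 < s.re) : FL s * riemannZeta s = riemannZeta (2 * s) := by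
  rw [← LSeries_lamAF_eq_FL hC hL hs]
  exact key_identity hs

lemma FL_mul_zeta_strip (hC : 0 < C)
    (hL : ∀ x : ℝ, 2 ≤ x → |(L x : ℝ)| ≤ C * x ^ ((1 : ℝ) / 2) * Real.log x)
    {s : ℂ} (hs : 1 / 2 < s.re) (hs1 : s ≠ 1) :
    FL s * riemannZeta s = riemannZeta (2 * s) := by
  set sg : ℝ := (1/2 + min s.re 1) / 2 with hsgdef
  have hmin : 1/2 < min s.re 1 := lt_min hs (by norm_num)
  have hsghalf : 1/2 < sg := by rw [hsgdef]; linarith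
  have hsg1 : sg < 1 := by
    have : min s.re 1 ≤ 1 := min_le_right _ _
    rw [hsgdef]; linarith
  have hsgs : sg < s.re := by
    have : min s.re 1 ≤ s.re := min_le_left _ _
    rw [hsgdef]; linarith
  set U : Set ℂ := {z : ℂ | sg < z.re ∧ z ≠ 1} with hUdef
  have hUopen : IsOpen U := by
    have h1 : IsOpen {z : ℂ | sg < z.re} := isOpen_lt continuous_const Complex.continuous_re
    have h2 : IsOpen {z : ℂ | z ≠ 1} := isOpen_compl_singleton
    exact h1.inter h2
  have hG1 : AnalyticOnNhd ℂ (fun z ↦ FL z * riemannZeta z) U := by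
    refine DifferentiableOn.analyticOnNhd (fun z hz ↦ ?_) hUopen
    exact ((FL_differentiableAt hC hL (lt_trans hsghalf hz.1)).mul
      (differentiableAt_riemannZeta hz.2)).differentiableWithinAt
  have hG2 : AnalyticOnNhd ℂ (fun z ↦ riemannZeta (2 * z)) U := by
    refine DifferentiableOn.analyticOnNhd (fun z hz ↦ ?_) hUopen
    have h2z : (2 : ℂ) * z ≠ 1 := by
      intro hc
      have : ((2:ℂ) * z).re = 1 := by rw [hc]; simp
      rw [two_mul_re'] at this
      have : z.re = 1/2 := by linarith
      have := hz.1
      linarith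
    exact ((differentiableAt_riemannZeta h2z).comp z
      ((differentiableAt_id.const_mul (2:ℂ)))).differentiableWithinAt
  have hmem2 : (2 : ℂ) ∈ U := by
    constructor
    · simp; linarith
    · intro h; norm_num at h
  have hev : (fun z ↦ FL z * riemannZeta z) =ᶠ[nhds (2:ℂ)] (fun z ↦ riemannZeta (2 * z)) := by
    have hop : IsOpen {z : ℂ | 1 < z.re} := isOpen_lt continuous_const Complex.continuous_re
    refine eventually_of_mem (hop.mem_nhds (by simp)) fun z hz ↦ FL_mul_zeta hC hL hz
  have heq := hG1.eqOn_of_preconnected_of_eventuallyEq hG2 (isPreconnected_U hsg1) hmem2 hev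
  exact heq ⟨hsgs, hs1⟩

lemma no_zero_right (hC : 0 < C)
    (hL : ∀ x : ℝ, 2 ≤ x → |(L x : ℝ)| ≤ C * x ^ ((1 : ℝ) / 2) * Real.log x)
    {s : ℂ} (hzero : riemannZeta s = 0) (h1 : 1 / 2 < s.re) (h2 : s.re < 1) :
    False := by
  have hs1 : s ≠ 1 := by intro h; rw [h] at h2; simp at h2
  have := FL_mul_zeta_strip hC hL h1 hs1
  rw [hzero, mul_zero] at this
  have h2s : 1 ≤ (2 * s).re := by rw [two_mul_re']; linarith
  exact riemannZeta_ne_zero_of_one_le_re h2s this.symm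

lemma reflect_zero {s : ℂ} (hzero : riemannZeta s = 0) (h0 : 0 < s.re) (h2 : s.re < 1 / 2) :
    riemannZeta (1 - s) = 0 := by
  have hs' : ∀ n : ℕ, (1 - s : ℂ) ≠ -n := by
    intro n h
    have : (1 - s).re = (-(n:ℂ)).re := by rw [h]
    simp at this
    linarith
  have hs1 : (1 - s : ℂ) ≠ 1 := by
    intro h
    have : s = 0 := by linear_combination -h
    rw [this] at h0; simp at h0
  have hfe := riemannZeta_one_sub hs' hs1
  have h11 : (1 : ℂ) - (1 - s) = s := by ring
  rw [h11, hzero] at hfe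
  -- hfe : 0 = 2 * (2π)^(-(1-s)) * Γ(1-s) * cos(π(1-s)/2) * ζ(1-s)
  have hne2 : (2 : ℂ) ≠ 0 := two_ne_zero
  have hnepow : ((2:ℂ) * (Real.pi : ℂ)) ^ (-(1 - s)) ≠ 0 := by
    intro h
    rw [Complex.cpow_eq_zero_iff] at h
    have h1 := h.1
    rw [mul_eq_zero] at h1
    rcases h1 with h1 | h1
    · exact two_ne_zero h1
    · exact Real.pi_ne_zero (Complex.ofReal_eq_zero.mp h1)
  have hneG : Complex.Gamma (1 - s) ≠ 0 := by
    refine Complex.Gamma_ne_zero fun m h ↦ ?_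
    have : (1 - s).re = (-(m:ℂ)).re := by rw [h]
    simp at this
    linarith
  have hnecos : Complex.cos ((Real.pi : ℂ) * (1 - s) / 2) ≠ 0 := by
    intro h
    rw [Complex.cos_eq_zero_iff] at h
    obtain ⟨k, hk⟩ := h
    have hpi : (Real.pi : ℂ) ≠ 0 := Complex.ofReal_ne_zero.mpr Real.pi_ne_zero
    have h1s : (1 : ℂ) - s = 2 * k + 1 := by
      field_simp at hk
      -- hk : π * (1 - s) = (2k+1) * π
      linear_combination hk
    have hsx : s = -2 * k := by linear_combination -h1s
    have hre : s.re = -2 * (k : ℝ) := by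
      rw [hsx]
      simp
    rw [hre] at h0 h2
    have hk0 : (k : ℝ) < 0 := by linarith
    have hkz : k < 0 := by exact_mod_cast hk0
    have hk1 : (k : ℝ) ≤ -1 := by exact_mod_cast (by omega : k ≤ -1)
    nlinarith
  have := hfe.symm
  rcases mul_eq_zero.mp this with h | h
  · rcases mul_eq_zero.mp h with h | h
    · rcases mul_eq_zero.mp h with h | h
      · rcases mul_eq_zero.mp h with h | h
        · exact absurd h hne2
        · exact absurd h hnepow
      · exact absurd h hneG
    · exact absurd h hnecos
  · exact h

theorem riemann_hypothesis_of_liouville_bound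
    (h : ∃ C : ℝ, 0 < C ∧ ∀ x : ℝ, 2 ≤ x →
      |(L x : ℝ)| ≤ C * x ^ ((1 : ℝ) / 2) * Real.log x) :
    ∀ s : ℂ, riemannZeta s = 0 → 0 < s.re → s.re < 1 → s.re = 1 / 2 := by
  obtain ⟨C, hC, hL⟩ := h
  intro s hzero h0 h1
  rcases lt_trichotomy s.re (1/2) with hlt | heq | hgt
  · exfalso
    have hz2 := reflect_zero hzero h0 hlt
    refine no_zero_right hC hL hz2 ?_ ?_ <;>
      simp only [Complex.sub_re, Complex.one_re] <;> linarith
  · exact heq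
  · exfalso
    exact no_zero_right hC hL hzero hgt h1
end

section
/- If there exist constants B > 0 and C > 0 such that the Mertens summation function satisfies |M(x)| ≤ C·x^{1/2}·(log x)^{B+1} for all real x ≥ 2, then the Riemann hypothesis holds: every zero s of the Riemann zeta function with 0 < Re s < 1 satisfies Re s = 1/2. -/
open ArithmeticFunction

/-- The Mertens summation function `M(x) = ∑_{k ≤ x} μ(k)` for real `x`. -/
noncomputable def mertens (x : ℝ) : ℤ := ∑ k ∈ Finset.Icc 1 ⌊x⌋₊, moebius k

open MeasureTheory Set Filter Asymptotics Complex

namespace MertensRH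

noncomputable def Mc (t : ℝ) : ℂ := (mertens t : ℤ)

variable {B C : ℝ}

lemma Mc_eq_sum (t : ℝ) : Mc t = ∑ k ∈ Finset.Icc 0 ⌊t⌋₊, (moebius k : ℂ) := by
  have h : Finset.Icc 0 ⌊t⌋₊ = insert 0 (Finset.Icc 1 ⌊t⌋₊) := by ext k; simp; omega
  rw [h, Finset.sum_insert (by simp), Mc, mertens]
  push_cast
  simp

lemma Mc_norm_eq (t : ℝ) : ‖Mc t‖ = |(mertens t : ℝ)| := by
  rw [Mc, show ((mertens t : ℤ) : ℂ) = (((mertens t : ℤ) : ℝ) : ℂ) by push_cast; ring,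
    Complex.norm_real, Real.norm_eq_abs]

lemma moebius_norm_le (k : ℕ) : ‖(moebius k : ℂ)‖ ≤ 1 := by
  have h := abs_moebius_le_one (n := k)
  calc ‖(moebius k : ℂ)‖ = |(moebius k : ℝ)| := by
        rw [show ((moebius k : ℤ) : ℂ) = (((moebius k : ℤ) : ℝ) : ℂ) by push_cast; ring,
          Complex.norm_real, Real.norm_eq_abs]
    _ ≤ 1 := by exact_mod_cast (by exact_mod_cast h : |(moebius k : ℝ)| ≤ 1)

lemma Mc_norm_le {t : ℝ} (ht : 1 ≤ t) : ‖Mc t‖ ≤ t := by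
  have h1 : ‖Mc t‖ ≤ ∑ k ∈ Finset.Icc 1 ⌊t⌋₊, ‖(moebius k : ℂ)‖ := by
    rw [Mc, mertens]; push_cast; exact norm_sum_le _ _
  calc ‖Mc t‖ ≤ ∑ k ∈ Finset.Icc 1 ⌊t⌋₊, (1:ℝ) :=
        h1.trans (Finset.sum_le_sum fun k _ => moebius_norm_le k)
    _ = ⌊t⌋₊ := by simp
    _ ≤ t := Nat.floor_le (by linarith)

lemma Mc_eq_zero_of_lt_one {t : ℝ} (ht : t < 1) : Mc t = 0 := by
  rw [Mc, mertens, Nat.floor_eq_zero.mpr ht]; simp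

lemma Mc_norm_le' (t : ℝ) : ‖Mc t‖ ≤ |t| + 1 := by
  rcases lt_or_ge t 1 with ht | ht
  · rw [Mc_eq_zero_of_lt_one ht]; simp; positivity
  · exact (Mc_norm_le ht).trans (by cases abs_cases t <;> linarith)

lemma measurable_Mc : Measurable Mc := by
  have : Mc = (fun n : ℕ => ((∑ k ∈ Finset.Icc 1 n, moebius k : ℤ) : ℂ)) ∘ (fun t : ℝ => ⌊t⌋₊) :=
    rfl
  rw [this]
  exact Measurable.comp (measurable_from_nat) Nat.measurable_floor

lemma locallyIntegrableOn_Mc : LocallyIntegrableOn Mc (Ioi 0) := by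
  refine LocallyIntegrable.locallyIntegrableOn ?_ _
  have hg : LocallyIntegrable (fun t : ℝ => |t| + 1) volume :=
    (show Continuous (fun t : ℝ => |t| + 1) by continuity).locallyIntegrable
  refine hg.mono measurable_Mc.aestronglyMeasurable ?_
  filter_upwards with t
  rw [Real.norm_eq_abs, _root_.abs_of_nonneg (by positivity : (0:ℝ) ≤ |t| + 1)]
  exact Mc_norm_le' t

section BigO

variable (hB : 0 < B) (hC : 0 < C)
  (hM : ∀ x : ℝ, 2 ≤ x → |(mertens x : ℝ)| ≤ C * x ^ ((1 : ℝ) / 2) * Real.log x ^ (B + 1))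

include hM in
lemma Mc_isBigO {a : ℝ} (ha : 1 / 2 < a) : Mc =O[atTop] (fun x : ℝ => x ^ a) := by
  have h1 : Mc =O[atTop] (fun x : ℝ => C * (x ^ ((1:ℝ)/2) * Real.log x ^ (B + 1))) := by
    rw [isBigO_iff]
    refine ⟨1, ?_⟩
    filter_upwards [eventually_ge_atTop (2:ℝ)] with x hx
    rw [Mc_norm_eq, one_mul]
    refine (hM x hx).trans ?_
    rw [mul_assoc]
    exact le_abs_self _
  refine (h1.trans (IsBigO.const_mul_left ?_ C))
  have h2 : (fun x : ℝ => Real.log x ^ (B + 1)) =o[atTop] (fun x : ℝ => x ^ (a - 1/2)) :=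
    isLittleO_log_rpow_rpow_atTop (B + 1) (by linarith)
  have h3 := (isBigO_refl (fun x : ℝ => x ^ ((1:ℝ)/2)) atTop).mul h2.isBigO
  refine h3.trans (IsBigO.of_bound 1 ?_)
  filter_upwards [eventually_gt_atTop (0:ℝ)] with x hx
  rw [one_mul, ← Real.rpow_add hx]
  norm_num

lemma Mc_isBigO_zero (b : ℝ) : Mc =O[nhdsWithin 0 (Ioi 0)] (fun x : ℝ => x ^ b) := by
  have h : Mc =ᶠ[nhdsWithin 0 (Ioi 0)] (fun _ => 0) := by
    filter_upwards [Icc_mem_nhdsGT_of_mem (by norm_num : (0:ℝ) ∈ Ico 0 (1/2))] with t ht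
    exact Mc_eq_zero_of_lt_one (lt_of_le_of_lt ht.2 (by norm_num))
  exact h.trans_isBigO (isBigO_zero _ _)

/-- The candidate for `1/ζ`: `G s = s * ∫_0^∞ M(t) t^{-s-1} dt`. -/
noncomputable def G (s : ℂ) : ℂ := s * mellin Mc (-s)

include hM in
lemma differentiableAt_G {s : ℂ} (hs : 1 / 2 < s.re) : DifferentiableAt ℂ (G) s := by
  have hmel : ∀ z : ℂ, 1 / 2 < z.re → DifferentiableAt ℂ (mellin Mc) (-z) := by
    intro z hz
    refine mellin_differentiableAt_of_isBigO_rpow (a := -((1/2 + z.re)/2)) (b := -z.re - 1)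
      locallyIntegrableOn_Mc ?_ ?_ (Mc_isBigO_zero _) ?_
    · simpa using Mc_isBigO hM (by linarith : 1/2 < (1/2 + z.re)/2)
    · simp only [neg_re]; linarith
    · simp only [neg_re]; linarith
  have h2 : DifferentiableAt ℂ (fun z : ℂ => mellin Mc (-z)) s :=
    (hmel s hs).comp s differentiable_neg.differentiableAt
  exact differentiableAt_id.mul h2

end BigO


section Abel

/-- The key identity `L(μ, s) = s ∫_1^∞ M(t) t^{-s-1} dt` for `Re s > 1`. -/
lemma LSeries_moebius_eq_G {s : ℂ} (hs : 1 < s.re) :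
    LSeries (fun n => (moebius n : ℂ)) s = G s := by
  have hs0 : s ≠ 0 := fun h => by simp [h] at hs; linarith
  set c : ℕ → ℂ := fun k => (moebius k : ℂ) with hcdef
  set f : ℝ → ℂ := fun t => (t : ℂ) ^ (-s) with hf
  set g : ℝ → ℂ := fun t => -s * (t : ℂ) ^ (-s - 1) with hg
  have hderiv : ∀ t : ℝ, 0 < t → HasDerivAt f (g t) t := by
    intro t ht
    have h1 : HasDerivAt (fun y : ℝ => (y : ℂ) ^ (-s - 1 + 1) / (-s - 1 + 1))
        ((t : ℂ) ^ (-s - 1)) t :=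
      hasDerivAt_ofReal_cpow_const' ht.ne' (fun h => hs0 (by linear_combination -h))
    simp only [show -s - 1 + 1 = -s from by ring] at h1
    have h2 := h1.const_mul (-s)
    have he : f = fun y : ℝ => -s * ((y : ℂ) ^ (-s) / (-s)) := by
      funext y; rw [hf]; field_simp
    rw [he]
    simpa [hg, mul_comm] using h2
  have hderiv' : ∀ t : ℝ, 0 < t → deriv f t = g t := fun t ht => (hderiv t ht).deriv
  -- continuity of g on [1, ∞)
  have hgcont : ContinuousOn g (Ici (1:ℝ)) := by
    refine continuousOn_const.mul ?_
    refine ContinuousOn.cpow_const Complex.continuous_ofReal.continuousOn ?_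
    intro t ht
    exact Or.inl (by exact_mod_cast lt_of_lt_of_le zero_lt_one ht)
  -- Abel summation identity
  have habel : ∀ b : ℝ, ∑ k ∈ Finset.Icc 0 ⌊b⌋₊, f k * c k
      = f b * Mc b - ∫ t in Ioc 1 b, deriv f t * Mc t := by
    intro b
    have hint : IntegrableOn (deriv f) (Icc 1 b) := by
      refine ((hgcont.mono (Icc_subset_Ici_self)).integrableOn_Icc).congr_fun ?_ measurableSet_Icc
      exact fun t ht => (hderiv' t (lt_of_lt_of_le zero_lt_one ht.1)).symm
    have := sum_mul_eq_sub_integral_mul₀ c (by simp [hcdef]) b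
      (fun t ht => (hderiv t (lt_of_lt_of_le zero_lt_one ht.1)).differentiableAt) hint
    rw [this]
    simp only [hcdef, ← Mc_eq_sum]
  -- integrability of g * Mc on (1, ∞)
  have hgM_int : IntegrableOn (fun t => g t * Mc t) (Ioi 1) := by
    have hdom : IntegrableOn (fun t : ℝ => ‖s‖ * t ^ (-s.re)) (Ioi 1) :=
      (integrableOn_Ioi_rpow_of_lt (by linarith) zero_lt_one).const_mul _
    refine Integrable.mono' hdom ?_ ?_
    · exact ((hgcont.mono Ioi_subset_Ici_self).aestronglyMeasurable measurableSet_Ioi).mul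
        (measurable_Mc.aestronglyMeasurable.restrict)
    · filter_upwards [ae_restrict_mem measurableSet_Ioi] with t ht
      have ht0 : (0:ℝ) < t := lt_trans zero_lt_one ht
      have h1 : ‖g t * Mc t‖ = ‖s‖ * t ^ (-s.re - 1) * ‖Mc t‖ := by
        calc ‖g t * Mc t‖ = ‖-s‖ * (‖((t:ℝ):ℂ) ^ (-s - 1)‖ * ‖Mc t‖) := by
              rw [hg]; simp [norm_mul, mul_assoc]
          _ = ‖s‖ * t ^ (-s.re - 1) * ‖Mc t‖ := by
              simp only [norm_neg]
              rw [Complex.norm_cpow_eq_rpow_re_of_pos ht0,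
                show (-s - 1).re = -s.re - 1 by simp, mul_assoc]
      rw [h1]
      calc ‖s‖ * t ^ (-s.re - 1) * ‖Mc t‖ ≤ ‖s‖ * t ^ (-s.re - 1) * t := by
            refine mul_le_mul_of_nonneg_left (Mc_norm_le ht.le) ?_
            positivity
        _ = ‖s‖ * t ^ (-s.re) := by
            rw [mul_assoc, ← Real.rpow_add_one ht0.ne']
            ring_nf
  -- limit of partial sums
  have hterm : ∀ k : ℕ, f k * c k = LSeries.term (fun n => (moebius n : ℂ)) s k := by
    intro k
    rcases Nat.eq_zero_or_pos k with rfl | hk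
    · simp [hcdef, LSeries.term]
    · rw [LSeries.term, if_neg hk.ne', hf, hcdef]
      push_cast
      rw [cpow_neg]
      ring
  have hsummable : LSeriesSummable (fun n => (moebius n : ℂ)) s :=
    LSeriesSummable_moebius_iff.mpr hs
  have T1 : Tendsto (fun b : ℝ => ∑ k ∈ Finset.Icc 0 ⌊b⌋₊, f k * c k) atTop
      (nhds (LSeries (fun n => (moebius n : ℂ)) s)) := by
    have h1 : Tendsto (fun n : ℕ => ∑ k ∈ Finset.range (n+1),
        LSeries.term (fun n => (moebius n : ℂ)) s k) atTop
        (nhds (LSeries (fun n => (moebius n : ℂ)) s)) :=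
      (hsummable.hasSum.tendsto_sum_nat).comp (tendsto_add_atTop_nat 1)
    have h2 := h1.comp (tendsto_nat_floor_atTop (α := ℝ))
    refine h2.congr fun b => ?_
    simp only [Function.comp_apply]
    rw [show Finset.range (⌊b⌋₊ + 1) = Finset.Icc 0 ⌊b⌋₊ by
      rw [← Nat.Ico_zero_eq_range, Finset.Ico_add_one_right_eq_Icc]]
    exact Finset.sum_congr rfl fun k _ => (hterm k).symm
  -- limit of boundary term
  have T2 : Tendsto (fun b : ℝ => f b * Mc b) atTop (nhds 0) := by
    refine squeeze_zero_norm' ?_ (tendsto_rpow_neg_atTop (by linarith : 0 < s.re - 1))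
    filter_upwards [eventually_ge_atTop (1:ℝ)] with b hb
    have hb0 : (0:ℝ) < b := lt_of_lt_of_le zero_lt_one hb
    rw [norm_mul, hf, Complex.norm_cpow_eq_rpow_re_of_pos hb0]
    calc b ^ (-s).re * ‖Mc b‖ ≤ b ^ (-s).re * b :=
          mul_le_mul_of_nonneg_left (Mc_norm_le hb) (by positivity)
      _ = b ^ (-(s.re - 1)) := by
          rw [neg_re, ← Real.rpow_add_one hb0.ne']
          ring_nf
  -- limit of the integral term
  have T3 : Tendsto (fun b : ℝ => ∫ t in Ioc 1 b, deriv f t * Mc t) atTop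
      (nhds (∫ t in Ioi 1, g t * Mc t)) := by
    have h1 := intervalIntegral_tendsto_integral_Ioi 1 hgM_int tendsto_id
    refine h1.congr' ?_
    filter_upwards [eventually_ge_atTop (1:ℝ)] with b hb
    simp only [id_eq]
    rw [intervalIntegral.integral_of_le hb]
    refine setIntegral_congr_fun measurableSet_Ioc fun t ht => ?_
    rw [hderiv' t (lt_trans zero_lt_one ht.1)]
  -- combine
  have Tcomb : Tendsto (fun b : ℝ => ∑ k ∈ Finset.Icc 0 ⌊b⌋₊, f k * c k) atTop
      (nhds (0 - ∫ t in Ioi 1, g t * Mc t)) := by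
    refine Tendsto.congr (fun b => (habel b).symm) (T2.sub T3)
  have hL : LSeries (fun n => (moebius n : ℂ)) s = 0 - ∫ t in Ioi 1, g t * Mc t :=
    tendsto_nhds_unique T1 Tcomb
  -- identify with the Mellin transform
  have hmell : mellin Mc (-s) = ∫ t : ℝ in Ioi 1, ((t : ℝ) : ℂ) ^ (-s - 1) * Mc t := by
    rw [mellin]
    have hsplit : (Ioi (0:ℝ)) = Ioc 0 1 ∪ Ioi 1 := (Ioc_union_Ioi_eq_Ioi zero_le_one).symm
    have hz : ∀ t : ℝ, t ∈ Ioo (0:ℝ) 1 → ((t : ℝ) : ℂ) ^ (-s - 1) • Mc t = 0 := by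
      intro t ht
      rw [Mc_eq_zero_of_lt_one ht.2, smul_zero]
    have hint1 : IntegrableOn (fun t : ℝ => (t : ℂ) ^ (-s - 1) • Mc t) (Ioc 0 1) := by
      rw [IntegrableOn, Measure.restrict_congr_set Ioo_ae_eq_Ioc.symm]
      refine (integrable_zero _ _ _).congr ?_
      filter_upwards [ae_restrict_mem measurableSet_Ioo] with t ht
      exact (hz t ht).symm
    have hint2 : IntegrableOn (fun t : ℝ => (t : ℂ) ^ (-s - 1) • Mc t) (Ioi 1) := by
      have h' : IntegrableOn (fun t : ℝ => (-s)⁻¹ * (g t * Mc t)) (Ioi 1) :=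
        hgM_int.const_mul _
      refine h'.congr_fun (fun t ht => ?_) measurableSet_Ioi
      rw [smul_eq_mul, hg]
      have : -s ≠ 0 := neg_ne_zero.mpr hs0
      field_simp
    rw [hsplit, setIntegral_union (Ioc_disjoint_Ioi le_rfl) measurableSet_Ioi hint1 hint2]
    have : ∫ t in Ioc (0:ℝ) 1, (t : ℂ) ^ (-s - 1) • Mc t = 0 := by
      rw [integral_Ioc_eq_integral_Ioo]
      rw [setIntegral_congr_fun measurableSet_Ioo hz]
      simp
    rw [this, zero_add]
    simp_rw [smul_eq_mul]
  rw [hL, G, hmell]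
  rw [show (fun t : ℝ => g t * Mc t) = fun t : ℝ => -s * ((t:ℂ) ^ (-s - 1) * Mc t) by
    funext t; rw [hg]; ring]
  rw [integral_const_mul]
  ring

end Abel



section Final

/-- `(s-1)ζ(s)` patched to be entire. -/
noncomputable def Zext : ℂ → ℂ := Function.update (fun s => (s - 1) * riemannZeta s) 1 1

lemma Zext_of_ne {s : ℂ} (hs : s ≠ 1) : Zext s = (s - 1) * riemannZeta s :=
  Function.update_of_ne hs _ _

lemma differentiable_Zext : Differentiable ℂ Zext := by
  intro s
  rcases ne_or_eq s 1 with hs | rfl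
  · have hev : Zext =ᶠ[nhds s] (fun z => (z - 1) * riemannZeta z) := by
      filter_upwards [isOpen_compl_singleton.mem_nhds hs] with z hz
      exact Zext_of_ne hz
    exact (((differentiableAt_id.sub_const 1).mul (differentiableAt_riemannZeta hs))).congr_of_eventuallyEq hev
  · refine (analyticAt_of_differentiable_on_punctured_nhds_of_continuousAt ?_ ?_).differentiableAt
    · filter_upwards [self_mem_nhdsWithin] with z hz
      have hev : Zext =ᶠ[nhds z] (fun w => (w - 1) * riemannZeta w) := by
        filter_upwards [isOpen_compl_singleton.mem_nhds hz] with w hw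
        exact Zext_of_ne hw
      exact (((differentiableAt_id.sub_const 1).mul
        (differentiableAt_riemannZeta hz))).congr_of_eventuallyEq hev
    · rw [Zext, continuousAt_update_same]
      exact riemannZeta_residue_one

variable (hB : 0 < B) (hC : 0 < C)
  (hM : ∀ x : ℝ, 2 ≤ x → |(mertens x : ℝ)| ≤ C * x ^ ((1 : ℝ) / 2) * Real.log x ^ (B + 1))

include hM in
lemma zeta_ne_zero_of_strip {s : ℂ} (h1 : 1 / 2 < s.re) (h2 : s.re < 1) :
    riemannZeta s ≠ 0 := by
  set U : Set ℂ := {z : ℂ | 1 / 2 < z.re} with hU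
  have hUopen : IsOpen U := isOpen_lt continuous_const Complex.continuous_re
  have hUconn : IsPreconnected U := (convex_halfSpace_re_gt (1/2)).isPreconnected
  set H : ℂ → ℂ := fun z => Zext z * G z - (z - 1) with hH
  have hHdiff : DifferentiableOn ℂ H U := fun z hz =>
    (((differentiable_Zext z).mul (differentiableAt_G hM hz)).sub
      (differentiableAt_id.sub_const 1)).differentiableWithinAt
  have hHanalytic : AnalyticOnNhd ℂ H U := hHdiff.analyticOnNhd hUopen
  have h2U : (2:ℂ) ∈ U := by simp [hU]; norm_num
  have hev : H =ᶠ[nhds 2] 0 := by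
    have hopen : IsOpen {z : ℂ | 1 < z.re} := isOpen_lt continuous_const Complex.continuous_re
    have h2mem : (2:ℂ) ∈ {z : ℂ | 1 < z.re} := by norm_num [Set.mem_setOf_eq]
    filter_upwards [hopen.mem_nhds h2mem] with z hz
    have hz1 : 1 < z.re := hz
    have hzne : z ≠ 1 := fun h => by rw [h] at hz1; simp at hz1
    have hG : G z = LSeries (fun n => (moebius n : ℂ)) z := (LSeries_moebius_eq_G hz1).symm
    have key : riemannZeta z * G z = 1 := by
      rw [hG, ← LSeries_zeta_eq_riemannZeta hz1]
      exact LSeries_zeta_mul_Lseries_moebius hz1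
    simp only [hH, Pi.zero_apply, Zext_of_ne hzne]
    rw [mul_assoc, key, mul_one, sub_self]
  have hzero : EqOn H 0 U :=
    hHanalytic.eqOn_zero_of_preconnected_of_eventuallyEq_zero hUconn h2U hev
  have hsU : s ∈ U := h1
  have hs1 : s ≠ 1 := fun h => absurd h2 (by rw [h]; simp)
  have hHs : H s = 0 := hzero hsU
  simp only [hH, Pi.zero_apply, Zext_of_ne hs1] at hHs
  have hne : s - 1 ≠ 0 := sub_ne_zero.mpr hs1
  intro hzeta
  rw [hzeta] at hHs
  exact hne (by linear_combination -hHs)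

end Final

end MertensRH

theorem riemann_hypothesis_of_mertens_bound
    (h : ∃ B : ℝ, 0 < B ∧ ∃ C : ℝ, 0 < C ∧ ∀ x : ℝ, 2 ≤ x →
      |(mertens x : ℝ)| ≤ C * x ^ ((1 : ℝ) / 2) * Real.log x ^ (B + 1)) :
    ∀ s : ℂ, riemannZeta s = 0 → 0 < s.re → s.re < 1 → s.re = 1 / 2 := by
  obtain ⟨B, hB, C, hC, hM⟩ := h
  intro s hzero hre0 hre1
  by_contra hne
  rcases lt_or_gt_of_ne hne with hlt | hgt
  · -- 0 < re s < 1/2 : use the functional equation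
    have hs0 : ∀ n : ℕ, s ≠ -(n : ℂ) := by
      intro n hn
      rw [hn] at hre0
      simp at hre0
      have : (0:ℝ) ≤ n := Nat.cast_nonneg n
      linarith
    have hs1 : s ≠ 1 := fun h => by rw [h] at hre1; simp at hre1
    have hfe := riemannZeta_one_sub hs0 hs1
    rw [hzero, mul_zero] at hfe
    have h1 : 1 / 2 < (1 - s).re := by simp [Complex.sub_re]; linarith
    have h2 : (1 - s).re < 1 := by simp [Complex.sub_re]; linarith
    exact MertensRH.zeta_ne_zero_of_strip hM h1 h2 hfe
  · exact MertensRH.zeta_ne_zero_of_strip hM hgt hre1 hzero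
end
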